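/- Let S be a finite or countable set, x0 ∈ S, and for each i ∈ S let α_i > 0 and let q_i be a probability mass function on S (q_i(j) ≥ 0, ∑_{j∈S} q_i(j) = 1). Define the process law p on finite strings over S starting at x0 by p(empty string) = 1 and, recursively, p(x,i,j) = p(x,i) · (α_i q_i(j) + T_{i,j}(x0,x,i)) / (α_i + T_{i,·}(x0,x,i)), where T_{i,·}(z) = ∑_{j'} T_{i,j'}(z). Then p (the law of the reinforced Hoppe urn scheme) is Markov exchangeable. -/

import Mathlib

/-!
STATEMENT 18: the process law of the reinforced Hoppe urn scheme is
Markov exchangeable.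
-/

variable {S : Type*} [DecidableEq S]

/-- The number of transitions from `i` to `j` in the finite string `z`. -/
def transCount (z : List S) (i j : S) : ℕ :=
  (z.zip z.tail).countP (fun q => decide (q = (i, j)))

/-- The number of transitions from `i` in the finite string `z`. -/
def transFrom (z : List S) (i : S) : ℕ :=
  (z.zip z.tail).countP (fun q => decide (q.1 = i))

/-- Two finite strings are equivalent if they have the same first element and the
same transition counts between any two states. -/
def StringEquiv (z z' : List S) : Prop :=
  z.head? = z'.head? ∧ ∀ i j : S, transCount z i j = transCount z' i j

/-- One-step predictive probability of the reinforced Hoppe urn scheme: the past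
path is `z` (starting at `x0`, ending at the current state), the next state is `y`. -/
noncomputable def hoppeStep (α : S → ℝ) (q : S → S → ℝ) (z : List S) (y : S) : ℝ :=
  match z.getLast? with
  | none => 0
  | some i => (α i * q i y + (transCount z i y : ℝ)) / (α i + (transFrom z i : ℝ))

/-- The probability of appending the string `x` to the past path `z`. -/
noncomputable def lawFrom (step : List S → S → ℝ) : List S → List S → ℝ
  | _, [] => 1
  | z, y :: rest => step z y * lawFrom step (z ++ [y]) rest

/-- The process law of the reinforced Hoppe urn scheme started at `x0`:
`hoppeLaw α q x0 (x1, …, xn) = P(X_1 = x1, …, X_n = xn)`. -/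
noncomputable def hoppeLaw (α : S → ℝ) (q : S → S → ℝ) (x0 : S) (x : List S) : ℝ :=
  lawFrom (hoppeStep α q) [x0] x

/-! ### Auxiliary machinery -/

section Aux
variable {β : Type*} [DecidableEq β]

/-- Occurrences of `a` in `l`, phrased via `countP` to avoid `BEq` instance issues. -/
def cnt (a : β) (l : List β) : ℕ := l.countP (fun b => decide (b = a))

lemma cnt_append (a : β) (l l' : List β) : cnt a (l ++ l') = cnt a l + cnt a l' :=
  List.countP_append

lemma cnt_eq_count (a : β) (l : List β) : cnt a l = l.count a := by
  rw [List.count_eq_countP]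
  exact List.countP_congr (fun b _ => by simp)

/-- Sequential product with prefix: each element `b` of the second list contributes a
factor `f b c` where `c` is the number of occurrences of `b` strictly before it. -/
noncomputable def seqProdAux (f : β → ℕ → ℝ) : List β → List β → ℝ
  | _, [] => 1
  | pre, b :: t => f b (cnt b pre) * seqProdAux f (pre ++ [b]) t

lemma seqProdAux_congr_pre (f : β → ℕ → ℝ) (L : List β) :
    ∀ pre pre' : List β, (∀ b, cnt b pre = cnt b pre') →
      seqProdAux f pre L = seqProdAux f pre' L := by
  induction L with
  | nil => intro _ _ _; rfl
  | cons b t ih =>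
    intro pre pre' h
    simp only [seqProdAux, h b]
    exact congrArg _ (ih _ _ (fun c => by simp [cnt_append, h c]))

lemma seqProdAux_perm (f : β → ℕ → ℝ) {L L' : List β} (hp : L.Perm L') :
    ∀ pre, seqProdAux f pre L = seqProdAux f pre L' := by
  induction hp with
  | nil => intro _; rfl
  | cons b _ ih => intro pre; simp only [seqProdAux]; rw [ih]
  | swap a b t =>
    intro pre
    simp only [seqProdAux]
    rw [seqProdAux_congr_pre f t (pre ++ [b] ++ [a]) (pre ++ [a] ++ [b])
      (fun c => by simp only [cnt_append]; ring)]
    by_cases hab : a = b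
    · subst hab; ring
    · have h1 : cnt a (pre ++ [b]) = cnt a pre := by
        simp [cnt_append, cnt, Ne.symm hab]
      have h2 : cnt b (pre ++ [a]) = cnt b pre := by
        simp [cnt_append, cnt, hab]
      rw [h1, h2]; ring
  | trans _ _ ih1 ih2 => intro pre; rw [ih1 pre, ih2 pre]

end Aux

/-- The edges appended to the path when extending the path `z` by the string `x`. -/
def deltaEdges : List S → List S → List (S × S)
  | _, [] => []
  | z, y :: rest => (z.getLastD y, y) :: deltaEdges (z ++ [y]) rest

lemma zip_tail_concat : ∀ (z : List S) (y : S), z ≠ [] →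
    (z ++ [y]).zip (z ++ [y]).tail = z.zip z.tail ++ [(z.getLastD y, y)] := by
  intro z y hz
  induction z with
  | nil => exact absurd rfl hz
  | cons a t ih =>
    cases t with
    | nil => simp
    | cons b t' =>
      have := ih (by simp)
      simp only [List.cons_append, List.zip_cons_cons, List.tail_cons] at this ⊢
      rw [this]
      simp [List.getLastD]

lemma zip_tail_append : ∀ (x z : List S), z ≠ [] →
    (z ++ x).zip (z ++ x).tail = z.zip z.tail ++ deltaEdges z x := by
  intro x
  induction x with
  | nil => intro z _; simp [deltaEdges]
  | cons y rest ih =>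
    intro z hz
    have h1 : z ++ y :: rest = (z ++ [y]) ++ rest := by simp
    rw [h1, ih (z ++ [y]) (by simp), zip_tail_concat z y hz, deltaEdges]
    simp

lemma transCount_eq_cnt (z : List S) (i j : S) :
    transCount z i j = cnt (i, j) (z.zip z.tail) := rfl

lemma transFrom_eq_cnt (z : List S) (i : S) :
    transFrom z i = cnt i ((z.zip z.tail).map Prod.fst) := by
  rw [transFrom, cnt, List.countP_map]
  rfl

lemma lawFrom_eq (α : S → ℝ) (q : S → S → ℝ) :
    ∀ (x z : List S), z ≠ [] →
    lawFrom (hoppeStep α q) z x =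
      seqProdAux (fun e c => α e.1 * q e.1 e.2 + (c : ℝ)) (z.zip z.tail) (deltaEdges z x) /
      seqProdAux (fun i c => α i + (c : ℝ)) ((z.zip z.tail).map Prod.fst)
        ((deltaEdges z x).map Prod.fst) := by
  intro x
  induction x with
  | nil => intro z hz; simp [lawFrom, deltaEdges, seqProdAux]
  | cons y rest ih =>
    intro z hz
    have hlast : z.getLast? = some (z.getLastD y) := by
      rw [List.getLastD_eq_getLast?]
      cases h : z.getLast? with
      | none => exact absurd (List.getLast?_eq_none_iff.mp h) hz
      | some a => rfl
    set i := z.getLastD y with hi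
    have hstep : hoppeStep α q z y =
        (α i * q i y + (transCount z i y : ℝ)) / (α i + (transFrom z i : ℝ)) := by
      rw [hoppeStep, hlast]
    rw [lawFrom, hstep, ih (z ++ [y]) (by simp), deltaEdges]
    simp only [List.map_cons, seqProdAux]
    rw [zip_tail_concat z y hz, ← hi]
    rw [div_mul_div_comm, transCount_eq_cnt, transFrom_eq_cnt]
    simp [List.map_append]

theorem hoppe_markovExchangeable [Countable S] [Nontrivial S]
    (α : S → ℝ) (hα : ∀ i, 0 < α i)
    (q : S → S → ℝ) (hq0 : ∀ i j, 0 ≤ q i j) (hq1 : ∀ i, HasSum (q i) 1)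
    (x0 : S) :
    ∀ x x' : List S, StringEquiv (x0 :: x) (x0 :: x') →
      hoppeLaw α q x0 x = hoppeLaw α q x0 x' := by
  intro x x' ⟨_, hT⟩
  have key : ∀ y : List S, deltaEdges [x0] y = (x0 :: y).zip y := by
    intro y
    have := zip_tail_append y [x0] (by simp)
    simpa using this.symm
  have hperm : (deltaEdges [x0] x).Perm (deltaEdges [x0] x') := by
    rw [key, key]
    refine List.perm_iff_count.mpr (fun a => ?_)
    obtain ⟨i, j⟩ := a
    have h1 := hT i j
    rw [transCount_eq_cnt, transCount_eq_cnt, cnt_eq_count, cnt_eq_count] at h1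
    simp at h1
    convert h1 using 2 <;> exact lawful_beq_subsingleton _ _
  unfold hoppeLaw
  rw [lawFrom_eq α q x [x0] (by simp), lawFrom_eq α q x' [x0] (by simp)]
  rw [seqProdAux_perm _ hperm, seqProdAux_perm _ (hperm.map Prod.fst)]
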